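/- Suppose the step-sizes (η^t) form a nonincreasing sequence of nonnegative reals with η^t → 0 and Σ_{t=0}^∞ η^t = ∞, and suppose the unique stationary Nash equilibrium p** lies in [p̲, p̄]². Then the price path (p^t) and the reference-price path (r^t) generated by the OPGA dynamics both converge to p** as t → ∞. -/

import Mathlib

open Real Filter

/-- Deterministic utility u_i(p_i, r_i) = a_i - b_i * p_i + c_i * (r_i - p_i). -/
noncomputable def util (a b c pi ri : ℝ) : ℝ := a - b * pi + c * (ri - pi)

/-- MNL demand of product H. -/
noncomputable def demH (aH aL bH bL cH cL : ℝ) (p r : ℝ × ℝ) : ℝ :=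
  Real.exp (util aH bH cH p.1 r.1) /
    (1 + Real.exp (util aH bH cH p.1 r.1) + Real.exp (util aL bL cL p.2 r.2))

/-- MNL demand of product L. -/
noncomputable def demL (aH aL bH bL cH cL : ℝ) (p r : ℝ × ℝ) : ℝ :=
  Real.exp (util aL bL cL p.2 r.2) /
    (1 + Real.exp (util aH bH cH p.1 r.1) + Real.exp (util aL bL cL p.2 r.2))

/-- Scaled derivative of the log-revenue of firm H. -/
noncomputable def GrH (aH aL bH bL cH cL : ℝ) (p r : ℝ × ℝ) : ℝ :=
  1 / ((bH + cH) * p.1) + demH aH aL bH bL cH cL p r - 1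

/-- Scaled derivative of the log-revenue of firm L. -/
noncomputable def GrL (aH aL bH bL cH cL : ℝ) (p r : ℝ × ℝ) : ℝ :=
  1 / ((bL + cL) * p.2) + demL aH aL bH bL cH cL p r - 1

/-- Stationary Nash equilibrium: positive price vector on which both scaled
derivatives vanish at price = reference price. -/
def IsSNE (aH aL bH bL cH cL : ℝ) (p : ℝ × ℝ) : Prop :=
  0 < p.1 ∧ 0 < p.2 ∧ GrH aH aL bH bL cH cL p p = 0 ∧ GrL aH aL bH bL cH cL p p = 0

/-- Projection onto the interval [lo, hi]. -/
noncomputable def proj (lo hi x : ℝ) : ℝ := min (max x lo) hi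

/-- Membership of a price vector in P² = [lo, hi]². -/
def InP2 (lo hi : ℝ) (x : ℝ × ℝ) : Prop := x.1 ∈ Set.Icc lo hi ∧ x.2 ∈ Set.Icc lo hi

/-- Squared Euclidean norm on ℝ². -/
noncomputable def norm2sq (x : ℝ × ℝ) : ℝ := x.1 ^ 2 + x.2 ^ 2

/-- The OPGA dynamics for price path `pp` and reference-price path `rr`. -/
def OPGA (aH aL bH bL cH cL lo hi alpha : ℝ) (eta : ℕ → ℝ) (pp rr : ℕ → ℝ × ℝ) : Prop :=
  (∀ t, (pp (t+1)).1 =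
      proj lo hi ((pp t).1 + eta t * (bH + cH) * GrH aH aL bH bL cH cL (pp t) (rr t))) ∧
  (∀ t, (pp (t+1)).2 =
      proj lo hi ((pp t).2 + eta t * (bL + cL) * GrL aH aL bH bL cH cL (pp t) (rr t))) ∧
  (∀ t, (rr (t+1)).1 = alpha * (rr t).1 + (1 - alpha) * (pp t).1) ∧
  (∀ t, (rr (t+1)).2 = alpha * (rr t).2 + (1 - alpha) * (pp t).2)

/-- The weighted ℓ¹ distance to the SNE. -/
noncomputable def wdist (bH bL cH cL : ℝ) (pstar p : ℝ × ℝ) : ℝ :=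
  |pstar.1 - p.1| / (bH + cH) + |pstar.2 - p.2| / (bL + cL)

/-- The function 𝒢(p) = sign(p_H** − p_H)·G_H(p,p) + sign(p_L** − p_L)·G_L(p,p). -/
noncomputable def calG (aH aL bH bL cH cL : ℝ) (pstar p : ℝ × ℝ) : ℝ :=
  Real.sign (pstar.1 - p.1) * GrH aH aL bH bL cH cL p p +
  Real.sign (pstar.2 - p.2) * GrL aH aL bH bL cH cL p p

/-- The function ℋ(p) used in the local analysis around the SNE. -/
noncomputable def calH (aH aL bH bL cH cL : ℝ) (pstar p : ℝ × ℝ) : ℝ :=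
  (bH + cH) * GrH aH aL bH bL cH cL p p * (pstar.1 - p.1) +
  (bL + cL) * GrL aH aL bH bL cH cL p p * (pstar.2 - p.2)

/-- The constant M_G bounding |G_i| on P². -/
noncomputable def MG (bH bL cH cL lo : ℝ) : ℝ :=
  max (1 / ((bH + cH) * lo)) (1 / ((bL + cL) * lo)) + 1

/-- The Lipschitz constant l_r = (1/4)·√(c_H² + c_L²). -/
noncomputable def lr (cH cL : ℝ) : ℝ := (1 / 4) * Real.sqrt (cH ^ 2 + cL ^ 2)


lemma sign_mul_le_abs (z w : ℝ) : Real.sign z * w ≤ |w| := by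
  rcases lt_trichotomy z 0 with h | h | h
  · rw [Real.sign_of_neg h]; have := neg_abs_le w; linarith
  · rw [h, Real.sign_zero]; simpa using abs_nonneg w
  · rw [Real.sign_of_pos h]; simpa using le_abs_self w

lemma neg_abs_le_sign_mul (z w : ℝ) : -|w| ≤ Real.sign z * w := by
  rcases lt_trichotomy z 0 with h | h | h
  · rw [Real.sign_of_neg h]; have := le_abs_self w; linarith
  · rw [h, Real.sign_zero]; simpa using abs_nonneg w
  · rw [Real.sign_of_pos h]; simpa using neg_abs_le w

lemma abs_clamp_le (w a b : ℝ) (ha : a ≤ 0) (hb : 0 ≤ b) : |min (max w a) b| ≤ |w| := by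
  rcases le_total w a with h | h
  · rw [max_eq_right h, min_eq_left (le_trans ha hb)]
    rw [abs_of_nonpos ha, abs_of_nonpos (le_trans h ha)]; linarith
  · rw [max_eq_left h]
    rcases le_total w b with h2 | h2
    · rw [min_eq_left h2]
    · rw [min_eq_right h2, abs_of_nonneg hb, abs_of_nonneg (le_trans hb h2)]; linarith


lemma key1 (M ζ η η' u u' x mA mB : ℝ)
    (hη' : 0 ≤ η') (hle : η' ≤ η) (hu : |u| ≤ M) (huu : |u' - u| ≤ ζ) (hζ : 0 ≤ ζ)
    (hmA : mA ≤ 0) (hmB : 0 ≤ mB) :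
    |min (max (x - η*u) mA) mB| - |x| + η * (Real.sign x * u)
      + η' * (|u'| + Real.sign (min (max (x - η*u) mA) mB) * u')
    ≤ η * (|u| + Real.sign x * u) + 3*η*ζ + 2*(η - η')*M := by
  have hη : 0 ≤ η := le_trans hη' hle
  set w := x - η*u with hw
  set x' := min (max w mA) mB with hx'
  have hM : 0 ≤ M := le_trans (abs_nonneg u) hu
  have hu1 := abs_le.mp hu
  have huu1 := abs_le.mp huu
  have hu' : |u'| ≤ M + ζ := by
    have := abs_sub_abs_le_abs_sub u' u
    linarith
  have hu'1 := abs_le.mp hu'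
  have h1 : η' * |u'| ≤ η * |u| + η * ζ := by
    have h2 : η' * |u'| ≤ η * |u'| := by nlinarith [abs_nonneg u']
    nlinarith [abs_sub_abs_le_abs_sub u' u, abs_nonneg u]
  have key : |x'| + η' * (Real.sign x' * u') ≤ |x| + 2*η*ζ + 2*(η - η')*M := by
    have e2 : (η - η') * u' ≤ (η - η') * (M + ζ) := by nlinarith
    have e2' : -((η - η') * (M+ζ)) ≤ (η - η') * u' := by nlinarith
    rcases lt_trichotomy x' 0 with h | h | h
    · have hdown : w ≤ x' := by
        rcases le_or_gt (max w mA) mB with hc | hc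
        · rw [hx', min_eq_left hc]; exact le_max_left _ _
        · exfalso
          have hx'eq : x' = mB := min_eq_right hc.le
          rw [hx'eq] at h; linarith
      rw [Real.sign_of_neg h, abs_of_neg h]
      have hax : -|x| ≤ x := neg_abs_le x
      have e3 : η * u ≤ η * u' + η * ζ := by nlinarith
      nlinarith
    · rw [h, Real.sign_zero, abs_zero]
      have h0 : 0 ≤ |x| := abs_nonneg x
      nlinarith
    · have hup : x' ≤ w := by
        have h1' : x' ≤ max w mA := min_le_left _ _
        rcases le_or_gt w mA with hc | hc
        · rw [max_eq_right hc] at h1'; linarith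
        · rw [max_eq_left hc.le] at h1'; exact h1'
      rw [Real.sign_of_pos h, abs_of_pos h]
      have hax : x ≤ |x| := le_abs_self x
      have e3 : η * u' ≤ η * u + η * ζ := by nlinarith
      nlinarith
  linarith [key, h1]

set_option maxHeartbeats 2000000 in
lemma abstract_conv (x y u v η ε ζ : ℕ → ℝ) (mAx mBx mAy mBy κ M : ℝ)
    (hκ : 0 < κ) (hM : 0 < M)
    (hmAx : mAx ≤ 0) (hmBx : 0 ≤ mBx) (hmAy : mAy ≤ 0) (hmBy : 0 ≤ mBy)
    (hη0 : ∀ t, 0 ≤ η t) (hanti : Antitone η)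
    (hto0 : Tendsto η atTop (nhds 0))
    (hdiv : Tendsto (fun n => ∑ t ∈ Finset.range n, η t) atTop atTop)
    (hx : ∀ t, x (t+1) = min (max (x t - η t * u t) mAx) mBx)
    (hy : ∀ t, y (t+1) = min (max (y t - η t * v t) mAy) mBy)
    (hu : ∀ t, |u t| ≤ M) (hv : ∀ t, |v t| ≤ M)
    (hζu : ∀ t, |u (t+1) - u t| ≤ ζ t) (hζv : ∀ t, |v (t+1) - v t| ≤ ζ t)
    (hζ0 : ∀ t, 0 ≤ ζ t) (hζto : Tendsto ζ atTop (nhds 0))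
    (hε0 : ∀ t, 0 ≤ ε t) (hεto : Tendsto ε atTop (nhds 0))
    (hkey : ∀ t, κ * (|x t| + |y t|) - ε t ≤ Real.sign (x t) * u t + Real.sign (y t) * v t) :
    Tendsto (fun t => |x t| + |y t|) atTop (nhds 0) := by
  classical
  obtain ⟨D, hDt⟩ : ∃ D : ℕ → ℝ, ∀ t, D t = |x t| + |y t| := ⟨_, fun t => rfl⟩
  obtain ⟨ψ, hψt⟩ : ∃ ψ : ℕ → ℝ, ∀ t, ψ t = η t * (|u t| + Real.sign (x t) * u t)
                          + η t * (|v t| + Real.sign (y t) * v t) := ⟨_, fun t => rfl⟩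
  have hψ0 : ∀ t, 0 ≤ ψ t := by
    intro t
    have h1 := neg_abs_le_sign_mul (x t) (u t)
    have h2 := neg_abs_le_sign_mul (y t) (v t)
    have := hη0 t
    have := abs_nonneg (u t); have := abs_nonneg (v t)
    rw [hψt]
    nlinarith
  have hψle : ∀ t, ψ t ≤ 4 * M * η t := by
    intro t
    have h1 := sign_mul_le_abs (x t) (u t)
    have h2 := sign_mul_le_abs (y t) (v t)
    have := hη0 t
    have h3 := hu t; have h4 := hv t
    rw [hψt]
    nlinarith
  have hD0 : ∀ t, 0 ≤ D t := fun t => by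
    rw [hDt]; positivity
  -- one-step inequality
  have hstep : ∀ t, D (t+1) + ψ (t+1) + η t * (κ * D t)
      ≤ D t + ψ t + η t * ε t + 6 * η t * ζ t + 4*(η t - η (t+1))*M := by
    intro t
    have k1 := key1 M (ζ t) (η t) (η (t+1)) (u t) (u (t+1)) (x t) mAx mBx
      (hη0 (t+1)) (hanti (Nat.le_succ t)) (hu t) (hζu t) (hζ0 t) hmAx hmBx
    have k2 := key1 M (ζ t) (η t) (η (t+1)) (v t) (v (t+1)) (y t) mAy mBy
      (hη0 (t+1)) (hanti (Nat.le_succ t)) (hv t) (hζv t) (hζ0 t) hmAy hmBy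
    rw [← hx t] at k1
    rw [← hy t] at k2
    have hk := hkey t
    have hη := hη0 t
    have hmul : η t * (κ * (|x t| + |y t|) - ε t)
        ≤ η t * (Real.sign (x t) * u t + Real.sign (y t) * v t) :=
      mul_le_mul_of_nonneg_left hk hη
    simp only [hDt, hψt]
    nlinarith [k1, k2, hmul]
  -- master inequality
  have master : ∀ T n, D (T+n) ≤ D T + 8*M*η T
      + ∑ j ∈ Finset.range n, η (T+j) * (ε (T+j) + 6 * ζ (T+j) - κ * D (T+j)) := by
    intro T n
    have main : ∀ n, D (T+n) + ψ (T+n)  ≤ D T + ψ T + 4*(η T - η (T+n))*M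
        + ∑ j ∈ Finset.range n, (η (T+j) * ε (T+j) + 6 * η (T+j) * ζ (T+j)
            - η (T+j) * (κ * D (T+j))) := by
      intro n
      induction n with
      | zero => simp
      | succ n ih =>
        have hs := hstep (T+n)
        rw [Finset.sum_range_succ]
        have : T + (n+1) = (T+n) + 1 := by ring
        rw [this]
        linarith
    have h := main n
    have hψT := hψle T
    have hψn := hψ0 (T+n)
    have hηn : η (T+n) ≤ η T := hanti (Nat.le_add_right T n)
    have hη0' := hη0 (T+n)
    have hsum : ∑ j ∈ Finset.range n, (η (T+j) * ε (T+j) + 6 * η (T+j) * ζ (T+j)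
            - η (T+j) * (κ * D (T+j)))
        = ∑ j ∈ Finset.range n, η (T+j) * (ε (T+j) + 6 * ζ (T+j) - κ * D (T+j)) := by
      apply Finset.sum_congr rfl; intro j _; ring
    rw [hsum] at h
    nlinarith [h]
  -- one-step growth bound
  have hgrow : ∀ t, D (t+1) ≤ D t + 2*M*η t := by
    intro t
    have hbx : |x (t+1)| ≤ |x t| + η t * M := by
      rw [hx t]
      refine le_trans (abs_clamp_le _ _ _ hmAx hmBx) ?_
      have h1 : |x t - η t * u t| ≤ |x t| + |η t * u t| := by
        rw [sub_eq_add_neg]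
        refine le_trans (abs_add_le _ _) ?_
        rw [abs_neg]
      have h2 : |η t * u t| ≤ η t * M := by
        rw [abs_mul, abs_of_nonneg (hη0 t)]
        exact mul_le_mul_of_nonneg_left (hu t) (hη0 t)
      linarith
    have hby : |y (t+1)| ≤ |y t| + η t * M := by
      rw [hy t]
      refine le_trans (abs_clamp_le _ _ _ hmAy hmBy) ?_
      have h1 : |y t - η t * v t| ≤ |y t| + |η t * v t| := by
        rw [sub_eq_add_neg]
        refine le_trans (abs_add_le _ _) ?_
        rw [abs_neg]
      have h2 : |η t * v t| ≤ η t * M := by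
        rw [abs_mul, abs_of_nonneg (hη0 t)]
        exact mul_le_mul_of_nonneg_left (hv t) (hη0 t)
      linarith
    simp only [hDt]
    linarith
  -- final convergence
  rw [Metric.tendsto_atTop]
  intro ε₀ hε₀
  obtain ⟨ρ, hρ⟩ : ∃ ρ : ℝ, ρ = ε₀/3 := ⟨_, rfl⟩
  have hρpos : 0 < ρ := by rw [hρ]; positivity
  obtain ⟨N1, hN1⟩ := (Metric.tendsto_atTop.mp hεto) (κ*ρ/4) (by positivity)
  obtain ⟨N2, hN2⟩ := (Metric.tendsto_atTop.mp hζto) (κ*ρ/24) (by positivity)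
  obtain ⟨N3, hN3⟩ := (Metric.tendsto_atTop.mp hto0) (ρ/(10*M)) (by positivity)
  set T₀ := max N1 (max N2 N3) with hT₀
  have hT0prop : ∀ s, T₀ ≤ s → ε s + 6 * ζ s ≤ κ*ρ/2 ∧ η s ≤ ρ/(10*M) := by
    intro s hs
    have h1 := hN1 s (le_trans (le_max_left _ _) hs)
    have h2 := hN2 s (le_trans (le_trans (le_max_left _ _) (le_max_right _ _)) hs)
    have h3 := hN3 s (le_trans (le_trans (le_max_right _ _) (le_max_right _ _)) hs)
    rw [Real.dist_eq, sub_zero] at h1 h2 h3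
    rw [abs_of_nonneg (hε0 s)] at h1
    rw [abs_of_nonneg (hζ0 s)] at h2
    rw [abs_of_nonneg (hη0 s)] at h3
    exact ⟨by nlinarith, le_of_lt h3⟩
  have hηT₀ : η T₀ ≤ ρ/(10*M) := (hT0prop T₀ le_rfl).2
  have hηT₀' : 10*M*η T₀ ≤ ρ := by
    rw [le_div_iff₀ (by positivity)] at hηT₀
    nlinarith
  have claim1 : ∃ t₀, T₀ ≤ t₀ ∧ D t₀ ≤ ρ := by
    by_contra hc
    push_neg at hc
    obtain ⟨N, hN⟩ := (Filter.tendsto_atTop.mp hdiv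
      ((D T₀ + 8*M*η T₀ + 1) * (2/(κ*ρ)) + (∑ t ∈ Finset.range T₀, η t))).exists
    have hbig : (D T₀ + 8*M*η T₀ + 1) * (2/(κ*ρ)) + (∑ t ∈ Finset.range T₀, η t)
        ≤ ∑ t ∈ Finset.range (T₀ + N), η t := by
      refine le_trans hN ?_
      refine Finset.sum_le_sum_of_subset_of_nonneg ?_ (fun i _ _ => hη0 i)
      exact Finset.range_subset_range.mpr (Nat.le_add_left N T₀)
    have hshift : ∑ t ∈ Finset.range (T₀ + N), η t
        = (∑ t ∈ Finset.range T₀, η t) + ∑ j ∈ Finset.range N, η (T₀ + j) :=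
      Finset.sum_range_add η T₀ N
    have hsumlb : (D T₀ + 8*M*η T₀ + 1) * (2/(κ*ρ)) ≤ ∑ j ∈ Finset.range N, η (T₀ + j) := by
      rw [hshift] at hbig; linarith
    have hterm : ∀ j ∈ Finset.range N,
        η (T₀+j) * (ε (T₀+j) + 6 * ζ (T₀+j) - κ * D (T₀+j))
          ≤ -(κ*ρ/2) * η (T₀+j) := by
      intro j _
      have h1 := (hT0prop (T₀+j) (Nat.le_add_right _ _)).1
      have h2 := hc (T₀+j) (Nat.le_add_right _ _)
      have h3 := hη0 (T₀+j)
      have h4 : κ*ρ ≤ κ * D (T₀+j) := mul_le_mul_of_nonneg_left (le_of_lt h2) (le_of_lt hκ)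
      have h5 : ε (T₀+j) + 6 * ζ (T₀+j) - κ * D (T₀+j) ≤ -(κ*ρ/2) := by linarith
      have h6 := mul_le_mul_of_nonneg_left h5 h3
      have h7 : η (T₀+j) * (-(κ*ρ/2)) = -(κ*ρ/2) * η (T₀+j) := by ring
      rw [h7] at h6
      exact h6
    have hsum : ∑ j ∈ Finset.range N,
        η (T₀+j) * (ε (T₀+j) + 6 * ζ (T₀+j) - κ * D (T₀+j))
          ≤ -(κ*ρ/2) * ∑ j ∈ Finset.range N, η (T₀ + j) := by
      rw [Finset.mul_sum]
      exact Finset.sum_le_sum hterm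
    have hm := master T₀ N
    have hfin : -(κ*ρ/2) * ∑ j ∈ Finset.range N, η (T₀ + j)
        ≤ -(κ*ρ/2) * ((D T₀ + 8*M*η T₀ + 1) * (2/(κ*ρ))) := by
      have hneg : -(κ*ρ/2) ≤ 0 := by nlinarith
      exact mul_le_mul_of_nonpos_left hsumlb hneg
    have hve : -(κ*ρ/2) * ((D T₀ + 8*M*η T₀ + 1) * (2/(κ*ρ)))
        = -(D T₀ + 8*M*η T₀ + 1) := by
      field_simp
    have hDn := hD0 (T₀+N)
    rw [hve] at hfin
    have hx1 : D (T₀+N) ≤ D T₀ + 8*M*η T₀ + (-(κ*ρ/2) * ∑ j ∈ Finset.range N, η (T₀+j)) :=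
      le_trans hm (by linarith)
    linarith only [hx1, hfin, hDn]
  obtain ⟨t₀, ht₀T, ht₀D⟩ := claim1
  have h2ρ : ∀ n, t₀ ≤ n → D n ≤ 2*ρ := by
    intro n hn
    by_cases hcase : D n ≤ ρ
    · linarith
    push_neg at hcase
    have hP0 : D (t₀ + 0) ≤ ρ := by simpa using ht₀D
    set P : ℕ → Prop := fun j => D (t₀ + j) ≤ ρ with hP
    set k := Nat.findGreatest P (n - t₀) with hk
    have hkle : k ≤ n - t₀ := Nat.findGreatest_le _
    have hPk : P k := Nat.findGreatest_spec (Nat.zero_le _) hP0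
    have hmn : t₀ + k ≠ n := by
      intro he
      have : D n ≤ ρ := by rw [← he]; exact hPk
      linarith
    have hklt : t₀ + k < n := lt_of_le_of_ne (by omega) hmn
    have hgt : ∀ s, t₀ + k < s → s ≤ n → ρ < D s := by
      intro s h1 h2
      have h1' : k < s - t₀ := by omega
      rw [hk] at h1'
      have h2' : s - t₀ ≤ n - t₀ := by omega
      have hnP : ¬ P (s - t₀) := Nat.findGreatest_is_greatest h1' h2'
      have : ¬ D (t₀ + (s - t₀)) ≤ ρ := hnP
      rw [show t₀ + (s - t₀) = s from by omega] at this
      linarith [not_le.mp this]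
    have hηm : η (t₀+k) ≤ η T₀ := hanti (le_trans ht₀T (Nat.le_add_right _ _))
    have hm1 : D (t₀+k+1) ≤ ρ + 2*M*η T₀ := by
      have hg := hgrow (t₀+k)
      have : 2*M*η (t₀+k) ≤ 2*M*η T₀ := by nlinarith
      have hPk' : D (t₀+k) ≤ ρ := hPk
      linarith
    have hmaster := master (t₀+k+1) (n - (t₀+k+1))
    rw [show t₀+k+1 + (n - (t₀+k+1)) = n from by omega] at hmaster
    have hsum0 : ∑ j ∈ Finset.range (n - (t₀+k+1)),
        η (t₀+k+1+j) * (ε (t₀+k+1+j) + 6 * ζ (t₀+k+1+j) - κ * D (t₀+k+1+j)) ≤ 0 := by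
      refine Finset.sum_nonpos ?_
      intro j hj
      have hjlt := Finset.mem_range.mp hj
      have hs1 : t₀ + k < t₀+k+1+j := by omega
      have hs2 : t₀+k+1+j ≤ n := by omega
      have hDs := hgt _ hs1 hs2
      have hT0s := (hT0prop (t₀+k+1+j) (by omega)).1
      refine mul_nonpos_iff.mpr (Or.inl ⟨hη0 _, ?_⟩)
      have hκρ : 0 < κ * ρ := mul_pos hκ hρpos
      have : κ * ρ ≤ κ * D (t₀+k+1+j) := mul_le_mul_of_nonneg_left (le_of_lt hDs) (le_of_lt hκ)
      linarith
    have hη1 : η (t₀+k+1) ≤ η T₀ := hanti (by omega)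
    have h8 : 8*M*η (t₀+k+1) ≤ 8*M*η T₀ := by nlinarith
    linarith [hmaster, hsum0, hm1]
  refine ⟨t₀, fun n hn => ?_⟩
  have hDn := h2ρ n hn
  have hDn0 := hD0 n
  simp only [Real.dist_eq, sub_zero]
  rw [abs_of_nonneg (by positivity : (0:ℝ) ≤ |x n| + |y n|)]
  rw [hDt] at hDn
  have h2ρε : 2*ρ < ε₀ := by rw [hρ]; linarith
  linarith


-- Lipschitz of z ↦ exp z/(C + exp z), constant 1
lemma lip_main (C : ℝ) (hC : 0 < C) (a a' : ℝ) :
    |Real.exp a / (C + Real.exp a) - Real.exp a' / (C + Real.exp a')| ≤ |a - a'| := by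
  have hden : ∀ t : ℝ, C + Real.exp t ≠ 0 := fun t => by positivity
  have hder : ∀ t : ℝ, HasDerivAt (fun z => Real.exp z / (C + Real.exp z))
      ((Real.exp t * (C + Real.exp t) - Real.exp t * Real.exp t) / (C + Real.exp t)^2) t := by
    intro t
    exact (Real.hasDerivAt_exp t).div ((Real.hasDerivAt_exp t).const_add C) (hden t)
  have hdiff : ∀ t ∈ Set.univ, DifferentiableAt ℝ (fun z => Real.exp z / (C + Real.exp z)) t :=
    fun t _ => (hder t).differentiableAt
  have hbound : ∀ t ∈ Set.univ, ‖deriv (fun z => Real.exp z / (C + Real.exp z)) t‖ ≤ 1 := by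
    intro t _
    rw [(hder t).deriv, Real.norm_eq_abs]
    have he := Real.exp_pos t
    have h2 : Real.exp t * (C + Real.exp t) - Real.exp t * Real.exp t = Real.exp t * C := by ring
    rw [h2, abs_div, abs_of_pos (by positivity), abs_of_pos (by positivity : (0:ℝ) < (C + Real.exp t)^2)]
    rw [div_le_one (by positivity)]
    nlinarith
  have h := Convex.norm_image_sub_le_of_norm_deriv_le hdiff hbound convex_univ
    (Set.mem_univ a') (Set.mem_univ a)
  simpa [Real.norm_eq_abs] using h

-- Lipschitz of z ↦ A/(C + exp z), constant 1, provided A ≤ C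
lemma lip_side (A C : ℝ) (hA : 0 < A) (hAC : A ≤ C) (a a' : ℝ) :
    |A / (C + Real.exp a) - A / (C + Real.exp a')| ≤ |a - a'| := by
  have hC : 0 < C := lt_of_lt_of_le hA hAC
  have hden : ∀ t : ℝ, C + Real.exp t ≠ 0 := fun t => by positivity
  have hder : ∀ t : ℝ, HasDerivAt (fun z => A / (C + Real.exp z))
      ((0 * (C + Real.exp t) - A * Real.exp t) / (C + Real.exp t)^2) t := by
    intro t
    exact (hasDerivAt_const t A).div ((Real.hasDerivAt_exp t).const_add C) (hden t)
  have hdiff : ∀ t ∈ Set.univ, DifferentiableAt ℝ (fun z => A / (C + Real.exp z)) t :=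
    fun t _ => (hder t).differentiableAt
  have hbound : ∀ t ∈ Set.univ, ‖deriv (fun z => A / (C + Real.exp z)) t‖ ≤ 1 := by
    intro t _
    rw [(hder t).deriv, Real.norm_eq_abs]
    have he := Real.exp_pos t
    have h2 : 0 * (C + Real.exp t) - A * Real.exp t = -(A * Real.exp t) := by ring
    rw [h2, abs_div, abs_neg, abs_of_pos (by positivity),
      abs_of_pos (by positivity : (0:ℝ) < (C + Real.exp t)^2)]
    rw [div_le_one (by positivity)]
    nlinarith
  have h := Convex.norm_image_sub_le_of_norm_deriv_le hdiff hbound convex_univ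
    (Set.mem_univ a') (Set.mem_univ a)
  simpa [Real.norm_eq_abs] using h

-- two-variable Lipschitz for sigma2 a b = exp a/(1+exp a+exp b)
lemma lip_sig2 (a b a' b' : ℝ) :
    |Real.exp a / (1 + Real.exp a + Real.exp b) - Real.exp a' / (1 + Real.exp a' + Real.exp b')|
      ≤ |a - a'| + |b - b'| := by
  have h1 : |Real.exp a / (1 + Real.exp a + Real.exp b)
      - Real.exp a' / (1 + Real.exp a' + Real.exp b)| ≤ |a - a'| := by
    have := lip_main (1 + Real.exp b) (by positivity) a a'
    have e1 : 1 + Real.exp a + Real.exp b = 1 + Real.exp b + Real.exp a := by ring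
    have e2 : 1 + Real.exp a' + Real.exp b = 1 + Real.exp b + Real.exp a' := by ring
    rw [e1, e2]; exact this
  have h2 : |Real.exp a' / (1 + Real.exp a' + Real.exp b)
      - Real.exp a' / (1 + Real.exp a' + Real.exp b')| ≤ |b - b'| := by
    have := lip_side (Real.exp a') (1 + Real.exp a') (Real.exp_pos a') (by linarith [Real.exp_pos a']) b b'
    have e1 : 1 + Real.exp a' + Real.exp b = 1 + Real.exp a' + Real.exp b := rfl
    exact this
  calc |Real.exp a / (1 + Real.exp a + Real.exp b) - Real.exp a' / (1 + Real.exp a' + Real.exp b')|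
      ≤ |Real.exp a / (1 + Real.exp a + Real.exp b) - Real.exp a' / (1 + Real.exp a' + Real.exp b)|
        + |Real.exp a' / (1 + Real.exp a' + Real.exp b) - Real.exp a' / (1 + Real.exp a' + Real.exp b')| :=
        abs_sub_le _ _ _
    _ ≤ |a - a'| + |b - b'| := add_le_add h1 h2

-- two-variable Lipschitz for tau2 a b = exp b/(1+exp a+exp b)
lemma lip_tau2 (a b a' b' : ℝ) :
    |Real.exp b / (1 + Real.exp a + Real.exp b) - Real.exp b' / (1 + Real.exp a' + Real.exp b')|
      ≤ |a - a'| + |b - b'| := by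
  have h1 : |Real.exp b / (1 + Real.exp a + Real.exp b)
      - Real.exp b' / (1 + Real.exp a + Real.exp b')| ≤ |b - b'| := by
    have := lip_main (1 + Real.exp a) (by positivity) b b'
    have e1 : 1 + Real.exp a + Real.exp b = 1 + Real.exp a + Real.exp b := rfl
    exact this
  have h2 : |Real.exp b' / (1 + Real.exp a + Real.exp b')
      - Real.exp b' / (1 + Real.exp a' + Real.exp b')| ≤ |a - a'| := by
    have := lip_side (Real.exp b') (1 + Real.exp b') (Real.exp_pos b') (by linarith [Real.exp_pos b']) a a'
    have e1 : 1 + Real.exp a + Real.exp b' = 1 + Real.exp b' + Real.exp a := by ring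
    have e2 : 1 + Real.exp a' + Real.exp b' = 1 + Real.exp b' + Real.exp a' := by ring
    rw [e1, e2]; exact this
  calc |Real.exp b / (1 + Real.exp a + Real.exp b) - Real.exp b' / (1 + Real.exp a' + Real.exp b')|
      ≤ |Real.exp b / (1 + Real.exp a + Real.exp b) - Real.exp b' / (1 + Real.exp a + Real.exp b')|
        + |Real.exp b' / (1 + Real.exp a + Real.exp b') - Real.exp b' / (1 + Real.exp a' + Real.exp b')| :=
        abs_sub_le _ _ _
    _ ≤ |b - b'| + |a - a'| := add_le_add h1 h2
    _ = |a - a'| + |b - b'| := by ring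


lemma mono_sum (s s' t t' : ℝ) (hs' : 0 < s') (ht' : 0 < t') (hs : s' ≤ s) (ht : t' ≤ t) :
    (s' + t') / (1 + s' + t') ≤ (s + t) / (1 + s + t) := by
  rw [div_le_div_iff₀ (by linarith) (by linarith)]
  nlinarith

lemma mono_diff (s s' t t' : ℝ) (hs' : 0 < s') (ht0 : 0 < t) (hs0 : 0 < s) (ht' : 0 < t')
    (hs : s' ≤ s) (htt : t ≤ t') :
    (s' - t') / (1 + s' + t') ≤ (s - t) / (1 + s + t) := by
  rw [div_le_div_iff₀ (by linarith) (by linarith)]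
  nlinarith [mul_le_mul_of_nonneg_right hs ht0.le, mul_le_mul_of_nonneg_left htt hs0.le]

lemma mono_own (s s' t : ℝ) (hs' : 0 < s') (ht : 0 < t) (hs : s' ≤ s) :
    s' / (1 + s' + t) ≤ s / (1 + s + t) := by
  rw [div_le_div_iff₀ (by linarith) (by linarith)]
  nlinarith

lemma mono_own2 (s t t' : ℝ) (ht' : 0 < t') (hs : 0 < s) (ht : t' ≤ t) :
    t' / (1 + s + t') ≤ t / (1 + s + t) := by
  rw [div_le_div_iff₀ (by linarith) (by linarith)]
  nlinarith

lemma recip_diff (B z w lo hi : ℝ) (hB : 0 < B) (hlo : 0 < lo) (hz : lo ≤ z) (hz2 : z ≤ hi)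
    (hw : lo ≤ w) (hw2 : w ≤ hi) (hzw : z ≤ w) :
    (w - z)/(B*hi^2) ≤ 1/(B*z) - 1/(B*w) := by
  have hzp : 0 < z := lt_of_lt_of_le hlo hz
  have hwp : 0 < w := lt_of_lt_of_le hlo hw
  have hhi : 0 < hi := lt_of_lt_of_le hzp hz2
  have h1 : 1/(B*z) - 1/(B*w) = (w-z)/(B*(z*w)) := by
    field_simp
  rw [h1]
  have hzw2 : z*w ≤ hi^2 := by nlinarith
  rw [div_le_div_iff₀ (by positivity) (by positivity)]
  nlinarith [mul_nonneg (mul_nonneg hB.le (sub_nonneg.mpr hzw)) (sub_nonneg.mpr hzw2)]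

lemma minmax_swap (a b c : ℝ) (hbc : b ≤ c) : max (min a c) b = min (max a b) c := by
  rcases le_total a b with h | h <;> rcases le_total a c with h2 | h2 <;>
    simp [min_def, max_def] <;> split_ifs <;> linarith

lemma sign_div_pos (d B : ℝ) (hB : 0 < B) : Real.sign (d / B) = Real.sign d := by
  rcases lt_trichotomy d 0 with h | h | h
  · rw [Real.sign_of_neg h, Real.sign_of_neg (div_neg_of_neg_of_pos h hB)]
  · rw [h, zero_div, Real.sign_zero]
  · rw [Real.sign_of_pos h, Real.sign_of_pos (div_pos h hB)]

lemma min_lip (a b c : ℝ) : |min a c - min b c| ≤ |a - b| := by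
  have h := abs_max_sub_max_le_abs (-a) (-b) (-c)
  rw [max_neg_neg, max_neg_neg] at h
  have e : -min a c - -min b c = -(min a c - min b c) := by ring
  rw [e, abs_neg] at h
  have e2 : -a - -b = -(a-b) := by ring
  rw [e2, abs_neg] at h
  exact h

lemma geo_decay (α : ℝ) (h0 : 0 ≤ α) (h1 : α < 1) (s β : ℕ → ℝ)
    (hs0 : ∀ t, 0 ≤ s t) (hrec : ∀ t, s (t+1) ≤ α * s t + β t)
    (hβ : Tendsto β atTop (nhds 0)) : Tendsto s atTop (nhds 0) := by
  rw [Metric.tendsto_atTop]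
  intro ε hε
  obtain ⟨T, hT⟩ := (Metric.tendsto_atTop.mp hβ) ((1-α)*(ε/2)) (by nlinarith)
  have hβ' : ∀ t, T ≤ t → β t ≤ (1-α)*(ε/2) := by
    intro t ht
    have := hT t ht
    rw [Real.dist_eq, sub_zero] at this
    calc β t ≤ |β t| := le_abs_self _
    _ ≤ (1-α)*(ε/2) := this.le
  have hind : ∀ k, s (T+k) ≤ α^k * s T + ε/2 := by
    intro k
    induction k with
    | zero => simp; linarith [hs0 T]
    | succ k ih =>
      have hr := hrec (T+k)
      have hb := hβ' (T+k) (Nat.le_add_right _ _)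
      have : T + (k+1) = (T+k) + 1 := by ring
      rw [this]
      have hmul : α * s (T+k) ≤ α * (α^k * s T + ε/2) := mul_le_mul_of_nonneg_left ih h0
      have hexp : α * (α^k * s T + ε/2) = α^(k+1) * s T + α*(ε/2) := by ring
      nlinarith
  obtain ⟨K, hK⟩ := (Metric.tendsto_atTop.mp
    (tendsto_pow_atTop_nhds_zero_of_lt_one h0 h1)) (ε/(2*(s T + 1)))
    (div_pos hε (by nlinarith [hs0 T]))
  have hsT1 : 0 < s T + 1 := by linarith [hs0 T]
  refine ⟨T + K, fun n hn => ?_⟩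
  have hge : T ≤ n := by omega
  have hrep : n = T + (n - T) := by omega
  have hs' := hind (n - T)
  rw [← hrep] at hs'
  have hKn : K ≤ n - T := by omega
  have hexp : α^(n-T) ≤ α^K := pow_le_pow_of_le_one h0 h1.le hKn
  have hαK := hK K le_rfl
  rw [Real.dist_eq, sub_zero, abs_of_nonneg (pow_nonneg h0 K)] at hαK
  rw [Real.dist_eq, sub_zero, abs_of_nonneg (hs0 n)]
  have hm : α^(n-T) * s T ≤ α^K * s T := mul_le_mul_of_nonneg_right hexp (hs0 T)
  have hm2 : α^K * s T < ε/2 := by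
    have h4 : α^K * s T ≤ α^K * (s T + 1) := by nlinarith [pow_nonneg h0 K]
    have h5 : α^K * (s T + 1) < (ε/(2*(s T + 1))) * (s T + 1) :=
      mul_lt_mul_of_pos_right hαK hsT1
    have h6 : (ε/(2*(s T + 1))) * (s T + 1) = ε/2 := by field_simp
    linarith
  linarith

lemma core_pure (B1 B2 hi lo p1 p2 q1 q2 s s' t t' : ℝ)
    (hB1 : 0 < B1) (hB2 : 0 < B2) (hlo : 0 < lo)
    (hp1 : lo ≤ p1) (hp1' : p1 ≤ hi) (hp2 : lo ≤ p2) (hp2' : p2 ≤ hi)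
    (hq1 : lo ≤ q1) (hq1' : q1 ≤ hi) (hq2 : lo ≤ q2) (hq2' : q2 ≤ hi)
    (hs : 0 < s) (hs' : 0 < s') (ht : 0 < t) (ht' : 0 < t')
    (hms1 : p1 < q1 → s' < s) (hms2 : p1 = q1 → s = s') (hms3 : q1 < p1 → s < s')
    (hmt1 : p2 < q2 → t' < t) (hmt2 : p2 = q2 → t = t') (hmt3 : q2 < p2 → t < t')
    (hGHq : 1/(B1*q1) + s'/(1+s'+t') - 1 = 0) (hGLq : 1/(B2*q2) + t'/(1+s'+t') - 1 = 0) :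
    |q1-p1|/(B1*hi^2) + |q2-p2|/(B2*hi^2)
      ≤ Real.sign (q1-p1) * (1/(B1*p1) + s/(1+s+t) - 1)
        + Real.sign (q2-p2) * (1/(B2*p2) + t/(1+s+t) - 1) := by
  have hd : (0:ℝ) < 1+s+t := by linarith
  have hd' : (0:ℝ) < 1+s'+t' := by linarith
  have hP : s/(1+s+t) + t/(1+s+t) = (s+t)/(1+s+t) := (add_div s t _).symm
  have hQ : s'/(1+s'+t') + t'/(1+s'+t') = (s'+t')/(1+s'+t') := (add_div s' t' _).symm
  have hP2 : s/(1+s+t) - t/(1+s+t) = (s-t)/(1+s+t) := div_sub_div_same s t _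
  have hQ2 : s'/(1+s'+t') - t'/(1+s'+t') = (s'-t')/(1+s'+t') := div_sub_div_same s' t' _
  rcases lt_trichotomy p1 q1 with h1 | h1 | h1 <;> rcases lt_trichotomy p2 q2 with h2 | h2 | h2
  · -- p1 < q1, p2 < q2
    rw [Real.sign_of_pos (sub_pos.mpr h1), Real.sign_of_pos (sub_pos.mpr h2),
      abs_of_pos (sub_pos.mpr h1), abs_of_pos (sub_pos.mpr h2)]
    have hR1 := recip_diff B1 p1 q1 lo hi hB1 hlo hp1 hp1' hq1 hq1' h1.le
    have hR2 := recip_diff B2 p2 q2 lo hi hB2 hlo hp2 hp2' hq2 hq2' h2.le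
    have hDem := mono_sum s s' t t' hs' ht' (hms1 h1).le (hmt1 h2).le
    linarith
  · -- p1 < q1, p2 = q2
    rw [Real.sign_of_pos (sub_pos.mpr h1), abs_of_pos (sub_pos.mpr h1), h2, sub_self,
      Real.sign_zero, abs_zero, zero_div, zero_mul]
    have hR1 := recip_diff B1 p1 q1 lo hi hB1 hlo hp1 hp1' hq1 hq1' h1.le
    have hteq : t = t' := hmt2 h2
    rw [← hteq] at hGHq
    have hDem := mono_own s s' t hs' ht (hms1 h1).le
    linarith
  · -- p1 < q1, q2 < p2
    rw [Real.sign_of_pos (sub_pos.mpr h1), abs_of_pos (sub_pos.mpr h1),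
      Real.sign_of_neg (sub_neg.mpr h2), abs_of_neg (sub_neg.mpr h2)]
    have hR1 := recip_diff B1 p1 q1 lo hi hB1 hlo hp1 hp1' hq1 hq1' h1.le
    have hR2 := recip_diff B2 q2 p2 lo hi hB2 hlo hq2 hq2' hp2 hp2' h2.le
    have hDem := mono_diff s s' t t' hs' ht hs ht' (hms1 h1).le (hmt3 h2).le
    have eneg2 : -(q2 - p2) / (B2*hi^2) = (p2 - q2) / (B2*hi^2) := by ring
    rw [eneg2]
    linarith
  · -- p1 = q1, p2 < q2
    rw [Real.sign_of_pos (sub_pos.mpr h2), abs_of_pos (sub_pos.mpr h2), h1, sub_self,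
      Real.sign_zero, abs_zero, zero_div, zero_mul]
    have hR2 := recip_diff B2 p2 q2 lo hi hB2 hlo hp2 hp2' hq2 hq2' h2.le
    have hseq : s = s' := hms2 h1
    rw [← hseq] at hGLq
    have hDem := mono_own2 s t t' ht' hs (hmt1 h2).le
    linarith
  · -- p1 = q1, p2 = q2
    rw [h1, h2, sub_self, Real.sign_zero, abs_zero, zero_div, zero_mul]
    simp
  · -- p1 = q1, q2 < p2
    rw [Real.sign_of_neg (sub_neg.mpr h2), abs_of_neg (sub_neg.mpr h2), h1, sub_self,
      Real.sign_zero, abs_zero, zero_div, zero_mul]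
    have hR2 := recip_diff B2 q2 p2 lo hi hB2 hlo hq2 hq2' hp2 hp2' h2.le
    have hseq : s = s' := hms2 h1
    rw [← hseq] at hGLq
    have hDem := mono_own2 s t' t ht hs (hmt3 h2).le
    have eneg2 : -(q2 - p2) / (B2*hi^2) = (p2 - q2) / (B2*hi^2) := by ring
    rw [eneg2]
    linarith
  · -- q1 < p1, p2 < q2
    rw [Real.sign_of_neg (sub_neg.mpr h1), abs_of_neg (sub_neg.mpr h1),
      Real.sign_of_pos (sub_pos.mpr h2), abs_of_pos (sub_pos.mpr h2)]
    have hR1 := recip_diff B1 q1 p1 lo hi hB1 hlo hq1 hq1' hp1 hp1' h1.le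
    have hR2 := recip_diff B2 p2 q2 lo hi hB2 hlo hp2 hp2' hq2 hq2' h2.le
    have hDem := mono_diff s' s t' t hs ht' hs' ht (hms3 h1).le (hmt1 h2).le
    have eneg1 : -(q1 - p1) / (B1*hi^2) = (p1 - q1) / (B1*hi^2) := by ring
    rw [eneg1]
    linarith
  · -- q1 < p1, p2 = q2
    rw [Real.sign_of_neg (sub_neg.mpr h1), abs_of_neg (sub_neg.mpr h1), h2, sub_self,
      Real.sign_zero, abs_zero, zero_div, zero_mul]
    have hR1 := recip_diff B1 q1 p1 lo hi hB1 hlo hq1 hq1' hp1 hp1' h1.le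
    have hteq : t = t' := hmt2 h2
    rw [← hteq] at hGHq
    have hDem := mono_own s' s t hs ht (hms3 h1).le
    have eneg1 : -(q1 - p1) / (B1*hi^2) = (p1 - q1) / (B1*hi^2) := by ring
    rw [eneg1]
    linarith
  · -- q1 < p1, q2 < p2
    rw [Real.sign_of_neg (sub_neg.mpr h1), abs_of_neg (sub_neg.mpr h1),
      Real.sign_of_neg (sub_neg.mpr h2), abs_of_neg (sub_neg.mpr h2)]
    have hR1 := recip_diff B1 q1 p1 lo hi hB1 hlo hq1 hq1' hp1 hp1' h1.le
    have hR2 := recip_diff B2 q2 p2 lo hi hB2 hlo hq2 hq2' hp2 hp2' h2.le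
    have hDem := mono_sum s' s t' t hs ht (hms3 h1).le (hmt3 h2).le
    have eneg1 : -(q1 - p1) / (B1*hi^2) = (p1 - q1) / (B1*hi^2) := by ring
    rw [eneg1]
    have eneg2 : -(q2 - p2) / (B2*hi^2) = (p2 - q2) / (B2*hi^2) := by ring
    rw [eneg2]
    linarith

lemma proj_clamp (B q z g lo hi : ℝ) (hB : 0 < B) (hlohi : lo ≤ hi) :
    (q - proj lo hi (z + B * g)) / B
      = min (max ((q - z)/B - g) ((q - hi)/B)) ((q - lo)/B) := by
  have hB' : B ≠ 0 := ne_of_gt hB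
  have e1 : (q - z)/B - g = (q - (z + B*g))/B := by field_simp; ring
  unfold proj
  rcases le_total (z + B*g) lo with h | h
  · rw [max_eq_right h, min_eq_left hlohi, e1]
    have h2 : (q - lo)/B ≤ (q - (z+B*g))/B := (div_le_div_iff_of_pos_right hB).mpr (by linarith)
    have h3 : (q - hi)/B ≤ (q - lo)/B := (div_le_div_iff_of_pos_right hB).mpr (by linarith)
    rw [max_eq_left (le_trans h3 h2), min_eq_right h2]
  · rw [max_eq_left h]
    rcases le_total (z + B*g) hi with h4 | h4
    · rw [min_eq_left h4, e1]
      have h2 : (q - hi)/B ≤ (q - (z+B*g))/B := (div_le_div_iff_of_pos_right hB).mpr (by linarith)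
      have h3 : (q - (z+B*g))/B ≤ (q - lo)/B := (div_le_div_iff_of_pos_right hB).mpr (by linarith)
      rw [max_eq_left h2, min_eq_left h3]
    · rw [min_eq_right h4, e1]
      have h2 : (q - (z+B*g))/B ≤ (q - hi)/B := (div_le_div_iff_of_pos_right hB).mpr (by linarith)
      have h3 : (q - hi)/B ≤ (q - lo)/B := (div_le_div_iff_of_pos_right hB).mpr (by linarith)
      rw [max_eq_right h2, min_eq_left h3]

lemma min_lip' (a b c : ℝ) : |min a c - min b c| ≤ |a - b| := by
  have h := abs_max_sub_max_le_abs (-a) (-b) (-c)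
  rw [max_neg_neg, max_neg_neg] at h
  have e : -min a c - -min b c = -(min a c - min b c) := by ring
  rw [e, abs_neg] at h
  have e2 : -a - -b = -(a-b) := by ring
  rw [e2, abs_neg] at h
  exact h

lemma proj_lip (lo hi a b : ℝ) : |proj lo hi a - proj lo hi b| ≤ |a - b| := by
  unfold proj
  exact le_trans (min_lip' _ _ hi) (abs_max_sub_max_le_abs a b lo)

lemma proj_self (lo hi a : ℝ) (h1 : lo ≤ a) (h2 : a ≤ hi) : proj lo hi a = a := by
  unfold proj
  rw [max_eq_left h1, min_eq_left h2]

lemma recip_lip (B a b lo : ℝ) (hB : 0 < B) (hlo : 0 < lo) (ha : lo ≤ a) (hb : lo ≤ b) :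
    |1/(B*a) - 1/(B*b)| ≤ |a - b| / (B*lo^2) := by
  have hap : 0 < a := lt_of_lt_of_le hlo ha
  have hbp : 0 < b := lt_of_lt_of_le hlo hb
  have h1 : 1/(B*a) - 1/(B*b) = (b-a)/(B*(a*b)) := by field_simp
  rw [h1, abs_div, abs_of_pos (by positivity : (0:ℝ) < B*(a*b)), abs_sub_comm b a]
  rw [div_le_div_iff₀ (by positivity) (by positivity)]
  have hlo2 : lo^2 ≤ a*b := by nlinarith
  nlinarith [abs_nonneg (a-b), mul_nonneg (mul_nonneg hB.le (abs_nonneg (a-b)))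
    (sub_nonneg.mpr hlo2)]

set_option maxHeartbeats 4000000 in
theorem OPGA_global_convergence (aH aL bH bL cH cL : ℝ)
    (hbH : 0 < bH) (hbL : 0 < bL) (hcH : 0 < cH) (hcL : 0 < cL)
    (lo hi : ℝ) (hlo : 0 < lo) (hlohi : lo ≤ hi) (alpha : ℝ) (halpha0 : 0 ≤ alpha) (halpha1 : alpha < 1)
    (eta : ℕ → ℝ) (hnn : ∀ t, 0 ≤ eta t) (hanti : Antitone eta)
    (hto0 : Tendsto eta atTop (nhds 0))
    (hdiv : Tendsto (fun n => ∑ t ∈ Finset.range n, eta t) atTop atTop)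
    (pstar : ℝ × ℝ) (hsne : IsSNE aH aL bH bL cH cL pstar)
    (huniq : ∀ q : ℝ × ℝ, IsSNE aH aL bH bL cH cL q → q = pstar)
    (hstar : InP2 lo hi pstar)
    (pp rr : ℕ → ℝ × ℝ) (hp0 : InP2 lo hi (pp 0)) (hr0 : InP2 lo hi (rr 0))
    (hdyn : OPGA aH aL bH bL cH cL lo hi alpha eta pp rr) :
    Tendsto pp atTop (nhds pstar) ∧ Tendsto rr atTop (nhds pstar) := by
  classical
  obtain ⟨hd1, hd2, hd3, hd4⟩ := hdyn
  obtain ⟨hsp1, hsp2, hsGH, hsGL⟩ := hsne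
  have hq1lo : lo ≤ pstar.1 := hstar.1.1
  have hq1hi : pstar.1 ≤ hi := hstar.1.2
  have hq2lo : lo ≤ pstar.2 := hstar.2.1
  have hq2hi : pstar.2 ≤ hi := hstar.2.2
  have hB1 : 0 < bH + cH := by linarith
  have hB2 : 0 < bL + cL := by linarith
  have hhi : 0 < hi := lt_of_lt_of_le hlo hlohi
  have hB1n : (bH+cH) ≠ 0 := ne_of_gt hB1
  have hB2n : (bL+cL) ≠ 0 := ne_of_gt hB2
  have hhin : hi ≠ 0 := ne_of_gt hhi
  -- box invariance
  have hbox : ∀ t, lo ≤ (pp t).1 ∧ (pp t).1 ≤ hi ∧ lo ≤ (pp t).2 ∧ (pp t).2 ≤ hi := by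
    intro t
    cases t with
    | zero => exact ⟨hp0.1.1, hp0.1.2, hp0.2.1, hp0.2.2⟩
    | succ n =>
      rw [hd1 n, hd2 n]
      unfold proj
      exact ⟨le_min (le_max_right _ _) hlohi, min_le_right _ _,
        le_min (le_max_right _ _) hlohi, min_le_right _ _⟩
  -- the constant M
  obtain ⟨M, hMdef⟩ : ∃ M : ℝ, M = max (1/((bH+cH)*lo)) (1/((bL+cL)*lo)) + 1 := ⟨_, rfl⟩
  have hK1pos : (0:ℝ) < 1/((bH+cH)*lo) := one_div_pos.mpr (mul_pos hB1 hlo)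
  have hK2pos : (0:ℝ) < 1/((bL+cL)*lo) := one_div_pos.mpr (mul_pos hB2 hlo)
  have hM1 : 1 ≤ M := by
    rw [hMdef]
    linarith [le_max_left (1/((bH+cH)*lo)) (1/((bL+cL)*lo))]
  have hM : 0 < M := by linarith
  -- demand bounds
  have hdem01 : ∀ (p r : ℝ × ℝ), 0 < demH aH aL bH bL cH cL p r ∧ demH aH aL bH bL cH cL p r < 1
      ∧ 0 < demL aH aL bH bL cH cL p r ∧ demL aH aL bH bL cH cL p r < 1 := by
    intro p r
    unfold demH demL
    have e1 := Real.exp_pos (util aH bH cH p.1 r.1)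
    have e2 := Real.exp_pos (util aL bL cL p.2 r.2)
    refine ⟨by positivity, ?_, by positivity, ?_⟩
    · rw [div_lt_one (by linarith)]; linarith
    · rw [div_lt_one (by linarith)]; linarith
  -- G bounds
  have hGHb : ∀ (p r : ℝ × ℝ), lo ≤ p.1 → |GrH aH aL bH bL cH cL p r| ≤ M := by
    intro p r hp
    have hp1 : 0 < p.1 := lt_of_lt_of_le hlo hp
    have hd := hdem01 p r
    have hrp : 0 < 1/((bH+cH)*p.1) := one_div_pos.mpr (mul_pos hB1 hp1)
    have hrec : 1/((bH+cH)*p.1) ≤ 1/((bH+cH)*lo) :=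
      one_div_le_one_div_of_le (mul_pos hB1 hlo) (by nlinarith)
    rw [abs_le]
    unfold GrH
    constructor
    · nlinarith [hd.1]
    · have hml := le_max_left (1/((bH+cH)*lo)) (1/((bL+cL)*lo))
      rw [hMdef]
      have := hd.2.1
      linarith
  have hGLb : ∀ (p r : ℝ × ℝ), lo ≤ p.2 → |GrL aH aL bH bL cH cL p r| ≤ M := by
    intro p r hp
    have hp2 : 0 < p.2 := lt_of_lt_of_le hlo hp
    have hd := hdem01 p r
    have hrp : 0 < 1/((bL+cL)*p.2) := one_div_pos.mpr (mul_pos hB2 hp2)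
    have hrec : 1/((bL+cL)*p.2) ≤ 1/((bL+cL)*lo) :=
      one_div_le_one_div_of_le (mul_pos hB2 hlo) (by nlinarith)
    rw [abs_le]
    unfold GrL
    constructor
    · nlinarith [hd.2.2.1]
    · have hml := le_max_right (1/((bH+cH)*lo)) (1/((bL+cL)*lo))
      rw [hMdef]
      have := hd.2.2.2
      linarith
  -- sequences
  obtain ⟨x, hxd⟩ : ∃ x : ℕ → ℝ, ∀ t, x t = (pstar.1 - (pp t).1)/(bH+cH) := ⟨_, fun _ => rfl⟩
  obtain ⟨y, hyd⟩ : ∃ y : ℕ → ℝ, ∀ t, y t = (pstar.2 - (pp t).2)/(bL+cL) := ⟨_, fun _ => rfl⟩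
  obtain ⟨u, hud⟩ : ∃ u : ℕ → ℝ, ∀ t, u t = GrH aH aL bH bL cH cL (pp t) (rr t) := ⟨_, fun _ => rfl⟩
  obtain ⟨v, hvd⟩ : ∃ v : ℕ → ℝ, ∀ t, v t = GrL aH aL bH bL cH cL (pp t) (rr t) := ⟨_, fun _ => rfl⟩
  obtain ⟨sd, hsdd⟩ : ∃ sd : ℕ → ℝ, ∀ t,
      sd t = |(rr t).1 - (pp t).1| + |(rr t).2 - (pp t).2| := ⟨_, fun _ => rfl⟩
  have hub : ∀ t, |u t| ≤ M := fun t => by rw [hud]; exact hGHb (pp t) (rr t) (hbox t).1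
  have hvb : ∀ t, |v t| ≤ M := fun t => by rw [hvd]; exact hGLb (pp t) (rr t) (hbox t).2.2.1
  -- price movement bounds
  have hmove1 : ∀ t, |(pp (t+1)).1 - (pp t).1| ≤ eta t * ((bH+cH)*M) := by
    intro t
    rw [hd1 t]
    have hself : proj lo hi ((pp t).1) = (pp t).1 := proj_self lo hi _ (hbox t).1 (hbox t).2.1
    have h1 : |proj lo hi ((pp t).1 + eta t*(bH+cH)*GrH aH aL bH bL cH cL (pp t) (rr t)) - (pp t).1|
        ≤ |eta t*(bH+cH)*GrH aH aL bH bL cH cL (pp t) (rr t)| := by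
      have hl := proj_lip lo hi ((pp t).1 + eta t*(bH+cH)*GrH aH aL bH bL cH cL (pp t) (rr t)) ((pp t).1)
      rw [hself] at hl
      have e : (pp t).1 + eta t*(bH+cH)*GrH aH aL bH bL cH cL (pp t) (rr t) - (pp t).1
          = eta t*(bH+cH)*GrH aH aL bH bL cH cL (pp t) (rr t) := by ring
      rw [e] at hl
      exact hl
    refine le_trans h1 ?_
    rw [abs_mul, abs_mul, abs_of_nonneg (hnn t), abs_of_pos hB1]
    have hG := hGHb (pp t) (rr t) (hbox t).1
    have h2 : eta t * (bH+cH) * |GrH aH aL bH bL cH cL (pp t) (rr t)| ≤ eta t * (bH+cH) * M :=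
      mul_le_mul_of_nonneg_left hG (by nlinarith [hnn t])
    nlinarith [h2]
  have hmove2 : ∀ t, |(pp (t+1)).2 - (pp t).2| ≤ eta t * ((bL+cL)*M) := by
    intro t
    rw [hd2 t]
    have hself : proj lo hi ((pp t).2) = (pp t).2 :=
      proj_self lo hi _ (hbox t).2.2.1 (hbox t).2.2.2
    have h1 : |proj lo hi ((pp t).2 + eta t*(bL+cL)*GrL aH aL bH bL cH cL (pp t) (rr t)) - (pp t).2|
        ≤ |eta t*(bL+cL)*GrL aH aL bH bL cH cL (pp t) (rr t)| := by
      have hl := proj_lip lo hi ((pp t).2 + eta t*(bL+cL)*GrL aH aL bH bL cH cL (pp t) (rr t)) ((pp t).2)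
      rw [hself] at hl
      have e : (pp t).2 + eta t*(bL+cL)*GrL aH aL bH bL cH cL (pp t) (rr t) - (pp t).2
          = eta t*(bL+cL)*GrL aH aL bH bL cH cL (pp t) (rr t) := by ring
      rw [e] at hl
      exact hl
    refine le_trans h1 ?_
    rw [abs_mul, abs_mul, abs_of_nonneg (hnn t), abs_of_pos hB2]
    have hG := hGLb (pp t) (rr t) (hbox t).2.2.1
    have h2 : eta t * (bL+cL) * |GrL aH aL bH bL cH cL (pp t) (rr t)| ≤ eta t * (bL+cL) * M :=
      mul_le_mul_of_nonneg_left hG (by nlinarith [hnn t])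
    nlinarith [h2]
  -- sdiff recursion and convergence
  have hsd0 : ∀ t, 0 ≤ sd t := by intro t; rw [hsdd]; positivity
  have hsdrec : ∀ t, sd (t+1) ≤ alpha * sd t + eta t * ((bH+cH)*M + (bL+cL)*M) := by
    intro t
    rw [hsdd, hsdd]
    have e1 : (rr (t+1)).1 - (pp (t+1)).1
        = alpha*((rr t).1 - (pp t).1) + ((pp t).1 - (pp (t+1)).1) := by rw [hd3 t]; ring
    have e2 : (rr (t+1)).2 - (pp (t+1)).2
        = alpha*((rr t).2 - (pp t).2) + ((pp t).2 - (pp (t+1)).2) := by rw [hd4 t]; ring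
    have h1 : |(rr (t+1)).1 - (pp (t+1)).1|
        ≤ alpha*|(rr t).1 - (pp t).1| + eta t * ((bH+cH)*M) := by
      rw [e1]
      refine le_trans (abs_add_le _ _) ?_
      rw [abs_mul, abs_of_nonneg halpha0, abs_sub_comm ((pp t).1) ((pp (t+1)).1)]
      linarith [hmove1 t]
    have h2 : |(rr (t+1)).2 - (pp (t+1)).2|
        ≤ alpha*|(rr t).2 - (pp t).2| + eta t * ((bL+cL)*M) := by
      rw [e2]
      refine le_trans (abs_add_le _ _) ?_
      rw [abs_mul, abs_of_nonneg halpha0, abs_sub_comm ((pp t).2) ((pp (t+1)).2)]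
      linarith [hmove2 t]
    have he : alpha * (|(rr t).1 - (pp t).1| + |(rr t).2 - (pp t).2|)
        = alpha*|(rr t).1 - (pp t).1| + alpha*|(rr t).2 - (pp t).2| := by ring
    rw [he]
    linarith
  have hsdto : Tendsto sd atTop (nhds 0) := by
    apply geo_decay alpha halpha0 halpha1 sd (fun t => eta t * ((bH+cH)*M + (bL+cL)*M)) hsd0 hsdrec
    have h := hto0.mul_const ((bH+cH)*M + (bL+cL)*M)
    simpa using h
  -- clamp recursions
  have hxstep : ∀ t, x (t+1) = min (max (x t - eta t * u t) ((pstar.1 - hi)/(bH+cH)))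
      ((pstar.1 - lo)/(bH+cH)) := by
    intro t
    simp only [hxd, hud]
    rw [hd1 t]
    have e : (pp t).1 + eta t*(bH+cH)*GrH aH aL bH bL cH cL (pp t) (rr t)
        = (pp t).1 + (bH+cH)*(eta t * GrH aH aL bH bL cH cL (pp t) (rr t)) := by ring
    rw [e]
    exact proj_clamp (bH+cH) pstar.1 ((pp t).1)
      (eta t * GrH aH aL bH bL cH cL (pp t) (rr t)) lo hi hB1 hlohi
  have hystep : ∀ t, y (t+1) = min (max (y t - eta t * v t) ((pstar.2 - hi)/(bL+cL)))
      ((pstar.2 - lo)/(bL+cL)) := by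
    intro t
    simp only [hyd, hvd]
    rw [hd2 t]
    have e : (pp t).2 + eta t*(bL+cL)*GrL aH aL bH bL cH cL (pp t) (rr t)
        = (pp t).2 + (bL+cL)*(eta t * GrL aH aL bH bL cH cL (pp t) (rr t)) := by ring
    rw [e]
    exact proj_clamp (bL+cL) pstar.2 ((pp t).2)
      (eta t * GrL aH aL bH bL cH cL (pp t) (rr t)) lo hi hB2 hlohi
  -- Lipschitz constant for G
  obtain ⟨CT, hCTdef⟩ : ∃ CT : ℝ,
      CT = 1/((bH+cH)*lo^2) + 1/((bL+cL)*lo^2) + (bH+cH) + (bL+cL) + cH + cL := ⟨_, rfl⟩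
  have hKa : (0:ℝ) < 1/((bH+cH)*lo^2) := one_div_pos.mpr (mul_pos hB1 (pow_pos hlo 2))
  have hKb : (0:ℝ) < 1/((bL+cL)*lo^2) := one_div_pos.mpr (mul_pos hB2 (pow_pos hlo 2))
  have hCT : 0 < CT := by rw [hCTdef]; linarith
  -- utility difference bounds
  have hutil1 : ∀ (z z' r r' : ℝ), |util aH bH cH z r - util aH bH cH z' r'|
      ≤ (bH+cH)*|z - z'| + cH*|r - r'| := by
    intro z z' r r'
    have e : util aH bH cH z r - util aH bH cH z' r' = -((bH+cH)*(z-z')) + cH*(r-r') := by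
      unfold util; ring
    rw [e]
    refine le_trans (abs_add_le _ _) ?_
    rw [abs_neg, abs_mul, abs_mul, abs_of_pos hB1, abs_of_pos hcH]
  have hutil2 : ∀ (z z' r r' : ℝ), |util aL bL cL z r - util aL bL cL z' r'|
      ≤ (bL+cL)*|z - z'| + cL*|r - r'| := by
    intro z z' r r'
    have e : util aL bL cL z r - util aL bL cL z' r' = -((bL+cL)*(z-z')) + cL*(r-r') := by
      unfold util; ring
    rw [e]
    refine le_trans (abs_add_le _ _) ?_
    rw [abs_neg, abs_mul, abs_mul, abs_of_pos hB2, abs_of_pos hcL]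
  -- demand Lipschitz (in everything)
  have hdemHlip : ∀ (p p' r r' : ℝ × ℝ),
      |demH aH aL bH bL cH cL p r - demH aH aL bH bL cH cL p' r'|
        ≤ ((bH+cH)*|p.1 - p'.1| + cH*|r.1 - r'.1|) + ((bL+cL)*|p.2 - p'.2| + cL*|r.2 - r'.2|) := by
    intro p p' r r'
    have h := lip_sig2 (util aH bH cH p.1 r.1) (util aL bL cL p.2 r.2)
      (util aH bH cH p'.1 r'.1) (util aL bL cL p'.2 r'.2)
    have b1 := hutil1 p.1 p'.1 r.1 r'.1
    have b2 := hutil2 p.2 p'.2 r.2 r'.2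
    unfold demH
    linarith
  have hdemLlip : ∀ (p p' r r' : ℝ × ℝ),
      |demL aH aL bH bL cH cL p r - demL aH aL bH bL cH cL p' r'|
        ≤ ((bH+cH)*|p.1 - p'.1| + cH*|r.1 - r'.1|) + ((bL+cL)*|p.2 - p'.2| + cL*|r.2 - r'.2|) := by
    intro p p' r r'
    have h := lip_tau2 (util aH bH cH p.1 r.1) (util aL bL cL p.2 r.2)
      (util aH bH cH p'.1 r'.1) (util aL bL cL p'.2 r'.2)
    have b1 := hutil1 p.1 p'.1 r.1 r'.1
    have b2 := hutil2 p.2 p'.2 r.2 r'.2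
    unfold demL
    linarith
  -- G Lipschitz
  have hGHlip : ∀ (p p' r r' : ℝ × ℝ), lo ≤ p.1 → lo ≤ p'.1 →
      |GrH aH aL bH bL cH cL p r - GrH aH aL bH bL cH cL p' r'|
        ≤ CT * (|p.1 - p'.1| + |p.2 - p'.2| + |r.1 - r'.1| + |r.2 - r'.2|) := by
    intro p p' r r' hp hp'
    have hrec := recip_lip (bH+cH) p.1 p'.1 lo hB1 hlo hp hp'
    have hdem := hdemHlip p p' r r'
    have htr : |GrH aH aL bH bL cH cL p r - GrH aH aL bH bL cH cL p' r'|
        ≤ |1/((bH+cH)*p.1) - 1/((bH+cH)*p'.1)|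
          + |demH aH aL bH bL cH cL p r - demH aH aL bH bL cH cL p' r'| := by
      unfold GrH
      have e : (1/((bH+cH)*p.1) + demH aH aL bH bL cH cL p r - 1)
          - (1/((bH+cH)*p'.1) + demH aH aL bH bL cH cL p' r' - 1)
          = (1/((bH+cH)*p.1) - 1/((bH+cH)*p'.1))
            + (demH aH aL bH bL cH cL p r - demH aH aL bH bL cH cL p' r') := by ring
      rw [e]
      exact abs_add_le _ _
    have edv : |p.1 - p'.1| / ((bH+cH)*lo^2) = (1/((bH+cH)*lo^2)) * |p.1 - p'.1| := by ring
    rw [edv] at hrec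
    have hA1 := abs_nonneg (p.1 - p'.1)
    have hA2 := abs_nonneg (p.2 - p'.2)
    have hA3 := abs_nonneg (r.1 - r'.1)
    have hA4 := abs_nonneg (r.2 - r'.2)
    have hKle : 1/((bH+cH)*lo^2) + (bH+cH) ≤ CT := by rw [hCTdef]; linarith
    have hc2 : (bL+cL) ≤ CT := by rw [hCTdef]; linarith
    have hc3 : cH ≤ CT := by rw [hCTdef]; linarith
    have hc4 : cL ≤ CT := by rw [hCTdef]; linarith
    have t1 : (1/((bH+cH)*lo^2) + (bH+cH))*|p.1 - p'.1| ≤ CT*|p.1 - p'.1| :=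
      mul_le_mul_of_nonneg_right hKle hA1
    have t2 : (bL+cL)*|p.2 - p'.2| ≤ CT*|p.2 - p'.2| := mul_le_mul_of_nonneg_right hc2 hA2
    have t3 : cH*|r.1 - r'.1| ≤ CT*|r.1 - r'.1| := mul_le_mul_of_nonneg_right hc3 hA3
    have t4 : cL*|r.2 - r'.2| ≤ CT*|r.2 - r'.2| := mul_le_mul_of_nonneg_right hc4 hA4
    have e5 : (1/((bH+cH)*lo^2))*|p.1 - p'.1| + (bH+cH)*|p.1 - p'.1|
        = (1/((bH+cH)*lo^2) + (bH+cH))*|p.1 - p'.1| := by ring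
    have e6 : CT*|p.1 - p'.1| + CT*|p.2 - p'.2| + CT*|r.1 - r'.1| + CT*|r.2 - r'.2|
        = CT * (|p.1 - p'.1| + |p.2 - p'.2| + |r.1 - r'.1| + |r.2 - r'.2|) := by ring
    linarith
  have hGLlip : ∀ (p p' r r' : ℝ × ℝ), lo ≤ p.2 → lo ≤ p'.2 →
      |GrL aH aL bH bL cH cL p r - GrL aH aL bH bL cH cL p' r'|
        ≤ CT * (|p.1 - p'.1| + |p.2 - p'.2| + |r.1 - r'.1| + |r.2 - r'.2|) := by
    intro p p' r r' hp hp'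
    have hrec := recip_lip (bL+cL) p.2 p'.2 lo hB2 hlo hp hp'
    have hdem := hdemLlip p p' r r'
    have htr : |GrL aH aL bH bL cH cL p r - GrL aH aL bH bL cH cL p' r'|
        ≤ |1/((bL+cL)*p.2) - 1/((bL+cL)*p'.2)|
          + |demL aH aL bH bL cH cL p r - demL aH aL bH bL cH cL p' r'| := by
      unfold GrL
      have e : (1/((bL+cL)*p.2) + demL aH aL bH bL cH cL p r - 1)
          - (1/((bL+cL)*p'.2) + demL aH aL bH bL cH cL p' r' - 1)
          = (1/((bL+cL)*p.2) - 1/((bL+cL)*p'.2))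
            + (demL aH aL bH bL cH cL p r - demL aH aL bH bL cH cL p' r') := by ring
      rw [e]
      exact abs_add_le _ _
    have edv : |p.2 - p'.2| / ((bL+cL)*lo^2) = (1/((bL+cL)*lo^2)) * |p.2 - p'.2| := by ring
    rw [edv] at hrec
    have hA1 := abs_nonneg (p.1 - p'.1)
    have hA2 := abs_nonneg (p.2 - p'.2)
    have hA3 := abs_nonneg (r.1 - r'.1)
    have hA4 := abs_nonneg (r.2 - r'.2)
    have hKle : 1/((bL+cL)*lo^2) + (bL+cL) ≤ CT := by rw [hCTdef]; linarith
    have hc1 : (bH+cH) ≤ CT := by rw [hCTdef]; linarith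
    have hc3 : cH ≤ CT := by rw [hCTdef]; linarith
    have hc4 : cL ≤ CT := by rw [hCTdef]; linarith
    have t1 : (1/((bL+cL)*lo^2) + (bL+cL))*|p.2 - p'.2| ≤ CT*|p.2 - p'.2| :=
      mul_le_mul_of_nonneg_right hKle hA2
    have t2 : (bH+cH)*|p.1 - p'.1| ≤ CT*|p.1 - p'.1| := mul_le_mul_of_nonneg_right hc1 hA1
    have t3 : cH*|r.1 - r'.1| ≤ CT*|r.1 - r'.1| := mul_le_mul_of_nonneg_right hc3 hA3
    have t4 : cL*|r.2 - r'.2| ≤ CT*|r.2 - r'.2| := mul_le_mul_of_nonneg_right hc4 hA4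
    have e5 : (1/((bL+cL)*lo^2))*|p.2 - p'.2| + (bL+cL)*|p.2 - p'.2|
        = (1/((bL+cL)*lo^2) + (bL+cL))*|p.2 - p'.2| := by ring
    have e6 : CT*|p.1 - p'.1| + CT*|p.2 - p'.2| + CT*|r.1 - r'.1| + CT*|r.2 - r'.2|
        = CT * (|p.1 - p'.1| + |p.2 - p'.2| + |r.1 - r'.1| + |r.2 - r'.2|) := by ring
    linarith
  -- reference-price moves
  have hrmove1 : ∀ t, |(rr (t+1)).1 - (rr t).1| ≤ |(rr t).1 - (pp t).1| := by
    intro t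
    have e : (rr (t+1)).1 - (rr t).1 = (1-alpha)*((pp t).1 - (rr t).1) := by rw [hd3 t]; ring
    rw [e, abs_mul, abs_of_nonneg (by linarith : (0:ℝ) ≤ 1 - alpha), abs_sub_comm]
    nlinarith [abs_nonneg ((rr t).1 - (pp t).1)]
  have hrmove2 : ∀ t, |(rr (t+1)).2 - (rr t).2| ≤ |(rr t).2 - (pp t).2| := by
    intro t
    have e : (rr (t+1)).2 - (rr t).2 = (1-alpha)*((pp t).2 - (rr t).2) := by rw [hd4 t]; ring
    rw [e, abs_mul, abs_of_nonneg (by linarith : (0:ℝ) ≤ 1 - alpha), abs_sub_comm]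
    nlinarith [abs_nonneg ((rr t).2 - (pp t).2)]
  -- zeta sequence
  obtain ⟨ζs, hζd⟩ : ∃ f : ℕ → ℝ, ∀ t,
      f t = CT*(eta t*((bH+cH)*M + (bL+cL)*M) + sd t) := ⟨_, fun _ => rfl⟩
  have hζ0 : ∀ t, 0 ≤ ζs t := by
    intro t
    rw [hζd]
    refine mul_nonneg hCT.le (add_nonneg (mul_nonneg (hnn t) ?_) (hsd0 t))
    exact add_nonneg (mul_nonneg hB1.le hM.le) (mul_nonneg hB2.le hM.le)
  have hζto : Tendsto ζs atTop (nhds 0) := by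
    have heq : ζs = fun t => CT*(eta t*((bH+cH)*M + (bL+cL)*M) + sd t) := funext hζd
    rw [heq]
    have h1 : Tendsto (fun t => eta t*((bH+cH)*M + (bL+cL)*M) + sd t) atTop (nhds 0) := by
      have h2 := hto0.mul_const ((bH+cH)*M + (bL+cL)*M)
      have h3 : Tendsto (fun t => eta t*((bH+cH)*M + (bL+cL)*M) + sd t) atTop
          (nhds (0*((bH+cH)*M + (bL+cL)*M) + 0)) := h2.add hsdto
      simpa using h3
    have h4 := h1.const_mul CT
    simpa using h4
  have hζu : ∀ t, |u (t+1) - u t| ≤ ζs t := by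
    intro t
    rw [hud, hud, hζd]
    have h := hGHlip (pp (t+1)) (pp t) (rr (t+1)) (rr t) (hbox (t+1)).1 (hbox t).1
    have hm1 := hmove1 t
    have hm2 := hmove2 t
    have hr1 := hrmove1 t
    have hr2 := hrmove2 t
    have hsum : |(pp (t+1)).1 - (pp t).1| + |(pp (t+1)).2 - (pp t).2|
        + |(rr (t+1)).1 - (rr t).1| + |(rr (t+1)).2 - (rr t).2|
        ≤ eta t*((bH+cH)*M + (bL+cL)*M) + sd t := by
      rw [hsdd]
      linarith
    calc |GrH aH aL bH bL cH cL (pp (t+1)) (rr (t+1)) - GrH aH aL bH bL cH cL (pp t) (rr t)|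
        ≤ CT * (|(pp (t+1)).1 - (pp t).1| + |(pp (t+1)).2 - (pp t).2|
            + |(rr (t+1)).1 - (rr t).1| + |(rr (t+1)).2 - (rr t).2|) := h
      _ ≤ CT*(eta t*((bH+cH)*M + (bL+cL)*M) + sd t) := mul_le_mul_of_nonneg_left hsum hCT.le
  have hζv : ∀ t, |v (t+1) - v t| ≤ ζs t := by
    intro t
    rw [hvd, hvd, hζd]
    have h := hGLlip (pp (t+1)) (pp t) (rr (t+1)) (rr t) (hbox (t+1)).2.2.1 (hbox t).2.2.1
    have hm1 := hmove1 t
    have hm2 := hmove2 t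
    have hr1 := hrmove1 t
    have hr2 := hrmove2 t
    have hsum : |(pp (t+1)).1 - (pp t).1| + |(pp (t+1)).2 - (pp t).2|
        + |(rr (t+1)).1 - (rr t).1| + |(rr (t+1)).2 - (rr t).2|
        ≤ eta t*((bH+cH)*M + (bL+cL)*M) + sd t := by
      rw [hsdd]
      linarith
    calc |GrL aH aL bH bL cH cL (pp (t+1)) (rr (t+1)) - GrL aH aL bH bL cH cL (pp t) (rr t)|
        ≤ CT * (|(pp (t+1)).1 - (pp t).1| + |(pp (t+1)).2 - (pp t).2|
            + |(rr (t+1)).1 - (rr t).1| + |(rr (t+1)).2 - (rr t).2|) := h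
      _ ≤ CT*(eta t*((bH+cH)*M + (bL+cL)*M) + sd t) := mul_le_mul_of_nonneg_left hsum hCT.le
  -- epsilon sequence
  obtain ⟨εs, hεd⟩ : ∃ f : ℕ → ℝ, ∀ t, f t = 2*(cH+cL)*sd t := ⟨_, fun _ => rfl⟩
  have hε0 : ∀ t, 0 ≤ εs t := by
    intro t
    rw [hεd]
    nlinarith [hsd0 t]
  have hεto : Tendsto εs atTop (nhds 0) := by
    have heq : εs = fun t => 2*(cH+cL)*sd t := funext hεd
    rw [heq]
    have h := hsdto.const_mul (2*(cH+cL))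
    simpa using h
  -- the key inequality
  have hkey : ∀ t, (1/hi^2) * (|x t| + |y t|) - εs t
      ≤ Real.sign (x t) * u t + Real.sign (y t) * v t := by
    intro t
    have hb := hbox t
    -- core inequality at r = p
    have hGHq : 1/((bH+cH)*pstar.1)
        + Real.exp (util aH bH cH pstar.1 pstar.1)
          / (1 + Real.exp (util aH bH cH pstar.1 pstar.1)
            + Real.exp (util aL bL cL pstar.2 pstar.2)) - 1 = 0 := hsGH
    have hGLq : 1/((bL+cL)*pstar.2)
        + Real.exp (util aL bL cL pstar.2 pstar.2)
          / (1 + Real.exp (util aH bH cH pstar.1 pstar.1)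
            + Real.exp (util aL bL cL pstar.2 pstar.2)) - 1 = 0 := hsGL
    have hcore := core_pure (bH+cH) (bL+cL) hi lo (pp t).1 (pp t).2 pstar.1 pstar.2
      (Real.exp (util aH bH cH (pp t).1 (pp t).1)) (Real.exp (util aH bH cH pstar.1 pstar.1))
      (Real.exp (util aL bL cL (pp t).2 (pp t).2)) (Real.exp (util aL bL cL pstar.2 pstar.2))
      hB1 hB2 hlo hb.1 hb.2.1 hb.2.2.1 hb.2.2.2 hq1lo hq1hi hq2lo hq2hi
      (Real.exp_pos _) (Real.exp_pos _) (Real.exp_pos _) (Real.exp_pos _)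
      (fun h => Real.exp_lt_exp.mpr (by unfold util; nlinarith))
      (fun h => by rw [h])
      (fun h => Real.exp_lt_exp.mpr (by unfold util; nlinarith))
      (fun h => Real.exp_lt_exp.mpr (by unfold util; nlinarith))
      (fun h => by rw [h])
      (fun h => Real.exp_lt_exp.mpr (by unfold util; nlinarith))
      hGHq hGLq
    -- convert core RHS to GrH/GrL at (p,p)
    have hGrHpp : GrH aH aL bH bL cH cL (pp t) (pp t)
        = 1/((bH+cH)*(pp t).1) + Real.exp (util aH bH cH (pp t).1 (pp t).1)
          / (1 + Real.exp (util aH bH cH (pp t).1 (pp t).1)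
            + Real.exp (util aL bL cL (pp t).2 (pp t).2)) - 1 := rfl
    have hGrLpp : GrL aH aL bH bL cH cL (pp t) (pp t)
        = 1/((bL+cL)*(pp t).2) + Real.exp (util aL bL cL (pp t).2 (pp t).2)
          / (1 + Real.exp (util aH bH cH (pp t).1 (pp t).1)
            + Real.exp (util aL bL cL (pp t).2 (pp t).2)) - 1 := rfl
    rw [← hGrHpp, ← hGrLpp] at hcore
    -- r-error control
    have hsx : Real.sign (x t) = Real.sign (pstar.1 - (pp t).1) := by
      rw [hxd]; exact sign_div_pos _ _ hB1
    have hsy : Real.sign (y t) = Real.sign (pstar.2 - (pp t).2) := by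
      rw [hyd]; exact sign_div_pos _ _ hB2
    have hlipH : |demH aH aL bH bL cH cL (pp t) (rr t) - demH aH aL bH bL cH cL (pp t) (pp t)|
        ≤ (cH+cL) * sd t := by
      have h := hdemHlip (pp t) (pp t) (rr t) (pp t)
      simp only [sub_self, abs_zero, mul_zero, zero_add, add_zero] at h
      rw [hsdd]
      nlinarith [abs_nonneg ((rr t).1 - (pp t).1), abs_nonneg ((rr t).2 - (pp t).2), h]
    have hlipL : |demL aH aL bH bL cH cL (pp t) (rr t) - demL aH aL bH bL cH cL (pp t) (pp t)|
        ≤ (cH+cL) * sd t := by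
      have h := hdemLlip (pp t) (pp t) (rr t) (pp t)
      simp only [sub_self, abs_zero, mul_zero, zero_add, add_zero] at h
      rw [hsdd]
      nlinarith [abs_nonneg ((rr t).1 - (pp t).1), abs_nonneg ((rr t).2 - (pp t).2), h]
    have hrH : Real.sign (pstar.1 - (pp t).1) * GrH aH aL bH bL cH cL (pp t) (pp t)
        - (cH+cL) * sd t ≤ Real.sign (pstar.1 - (pp t).1) * u t := by
      rw [hud]
      have heq : GrH aH aL bH bL cH cL (pp t) (rr t)
          = GrH aH aL bH bL cH cL (pp t) (pp t)
            + (demH aH aL bH bL cH cL (pp t) (rr t) - demH aH aL bH bL cH cL (pp t) (pp t)) := by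
        unfold GrH; ring
      rw [heq, mul_add]
      have h1 := neg_abs_le_sign_mul (pstar.1 - (pp t).1)
        (demH aH aL bH bL cH cL (pp t) (rr t) - demH aH aL bH bL cH cL (pp t) (pp t))
      linarith
    have hrL : Real.sign (pstar.2 - (pp t).2) * GrL aH aL bH bL cH cL (pp t) (pp t)
        - (cH+cL) * sd t ≤ Real.sign (pstar.2 - (pp t).2) * v t := by
      rw [hvd]
      have heq : GrL aH aL bH bL cH cL (pp t) (rr t)
          = GrL aH aL bH bL cH cL (pp t) (pp t)
            + (demL aH aL bH bL cH cL (pp t) (rr t) - demL aH aL bH bL cH cL (pp t) (pp t)) := by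
        unfold GrL; ring
      rw [heq, mul_add]
      have h1 := neg_abs_le_sign_mul (pstar.2 - (pp t).2)
        (demL aH aL bH bL cH cL (pp t) (rr t) - demL aH aL bH bL cH cL (pp t) (pp t))
      linarith
    -- combine
    have hxabs : |x t| = |pstar.1 - (pp t).1| / (bH+cH) := by
      rw [hxd, abs_div, abs_of_pos hB1]
    have hyabs : |y t| = |pstar.2 - (pp t).2| / (bL+cL) := by
      rw [hyd, abs_div, abs_of_pos hB2]
    have ed1 : |pstar.1 - (pp t).1| / ((bH+cH)*hi^2)
        = (1/hi^2) * (|pstar.1 - (pp t).1| / (bH+cH)) := by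
      rw [one_div_mul_eq_div, div_div]
    have ed2 : |pstar.2 - (pp t).2| / ((bL+cL)*hi^2)
        = (1/hi^2) * (|pstar.2 - (pp t).2| / (bL+cL)) := by
      rw [one_div_mul_eq_div, div_div]
    rw [ed1, ed2] at hcore
    rw [hsx, hsy, hxabs, hyabs, hεd]
    linarith [hcore, hrH, hrL]
  -- apply the abstract convergence lemma
  have habs : Tendsto (fun t => |x t| + |y t|) atTop (nhds 0) := by
    apply abstract_conv x y u v eta εs ζs
      ((pstar.1 - hi)/(bH+cH)) ((pstar.1 - lo)/(bH+cH))
      ((pstar.2 - hi)/(bL+cL)) ((pstar.2 - lo)/(bL+cL))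
      (1/hi^2) M (by positivity) hM
      (div_nonpos_of_nonpos_of_nonneg (by linarith) hB1.le)
      (div_nonneg (by linarith) hB1.le)
      (div_nonpos_of_nonpos_of_nonneg (by linarith) hB2.le)
      (div_nonneg (by linarith) hB2.le)
      hnn hanti hto0 hdiv hxstep hystep hub hvb hζu hζv hζ0 hζto hε0 hεto
    intro t
    have := hkey t
    linarith
  -- extract coordinatewise convergence
  have hx1 : ∀ t, |(pp t).1 - pstar.1| ≤ (bH+cH) * (|x t| + |y t|) := by
    intro t
    have h2 : |pstar.1 - (pp t).1| = (bH+cH) * |x t| := by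
      rw [hxd, abs_div, abs_of_pos hB1, mul_comm, div_mul_cancel₀ _ hB1n]
    rw [abs_sub_comm, h2]
    nlinarith [abs_nonneg (y t)]
  have hx2 : ∀ t, |(pp t).2 - pstar.2| ≤ (bL+cL) * (|x t| + |y t|) := by
    intro t
    have h2 : |pstar.2 - (pp t).2| = (bL+cL) * |y t| := by
      rw [hyd, abs_div, abs_of_pos hB2, mul_comm, div_mul_cancel₀ _ hB2n]
    rw [abs_sub_comm, h2]
    nlinarith [abs_nonneg (x t)]
  have hppt1 : Tendsto (fun t => (pp t).1) atTop (nhds pstar.1) := by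
    rw [tendsto_iff_dist_tendsto_zero]
    have hb : ∀ t, dist ((pp t).1) pstar.1 ≤ (bH+cH) * (|x t| + |y t|) := by
      intro t; rw [Real.dist_eq]; exact hx1 t
    apply squeeze_zero (fun t => dist_nonneg) hb
    have h := habs.const_mul (bH+cH)
    simpa using h
  have hppt2 : Tendsto (fun t => (pp t).2) atTop (nhds pstar.2) := by
    rw [tendsto_iff_dist_tendsto_zero]
    have hb : ∀ t, dist ((pp t).2) pstar.2 ≤ (bL+cL) * (|x t| + |y t|) := by
      intro t; rw [Real.dist_eq]; exact hx2 t
    apply squeeze_zero (fun t => dist_nonneg) hb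
    have h := habs.const_mul (bL+cL)
    simpa using h
  have hrrt1 : Tendsto (fun t => (rr t).1) atTop (nhds pstar.1) := by
    rw [tendsto_iff_dist_tendsto_zero]
    have hb : ∀ t, dist ((rr t).1) pstar.1 ≤ sd t + (bH+cH) * (|x t| + |y t|) := by
      intro t
      rw [Real.dist_eq]
      have h1 : |(rr t).1 - pstar.1| ≤ |(rr t).1 - (pp t).1| + |(pp t).1 - pstar.1| := by
        have e : (rr t).1 - pstar.1 = ((rr t).1 - (pp t).1) + ((pp t).1 - pstar.1) := by ring
        rw [e]; exact abs_add_le _ _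
      have h2 : |(rr t).1 - (pp t).1| ≤ sd t := by
        rw [hsdd]; nlinarith [abs_nonneg ((rr t).2 - (pp t).2)]
      linarith [hx1 t]
    apply squeeze_zero (fun t => dist_nonneg) hb
    have h2 : Tendsto (fun t => sd t + (bH+cH)*(|x t| + |y t|)) atTop (nhds (0 + (bH+cH)*0)) :=
      hsdto.add (habs.const_mul (bH+cH))
    simpa using h2
  have hrrt2 : Tendsto (fun t => (rr t).2) atTop (nhds pstar.2) := by
    rw [tendsto_iff_dist_tendsto_zero]
    have hb : ∀ t, dist ((rr t).2) pstar.2 ≤ sd t + (bL+cL) * (|x t| + |y t|) := by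
      intro t
      rw [Real.dist_eq]
      have h1 : |(rr t).2 - pstar.2| ≤ |(rr t).2 - (pp t).2| + |(pp t).2 - pstar.2| := by
        have e : (rr t).2 - pstar.2 = ((rr t).2 - (pp t).2) + ((pp t).2 - pstar.2) := by ring
        rw [e]; exact abs_add_le _ _
      have h2 : |(rr t).2 - (pp t).2| ≤ sd t := by
        rw [hsdd]; nlinarith [abs_nonneg ((rr t).1 - (pp t).1)]
      linarith [hx2 t]
    apply squeeze_zero (fun t => dist_nonneg) hb
    have h2 : Tendsto (fun t => sd t + (bL+cL)*(|x t| + |y t|)) atTop (nhds (0 + (bL+cL)*0)) :=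
      hsdto.add (habs.const_mul (bL+cL))
    simpa using h2
  constructor
  · have h := hppt1.prodMk_nhds hppt2
    simp only [Prod.mk.eta] at h
    exact h
  · have h := hrrt1.prodMk_nhds hrrt2
    simp only [Prod.mk.eta] at h
    exact h
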